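/- For every n >= 1 and N >= 1, the number of compositions of n all of whose parts are not divisible by N equals the number of compositions of n whose parts all lie in [1,N] and whose last part lies in [1,N-1]. -/

import Mathlib

open scoped Classical

namespace CardFGAux

def expand (N : ℕ) (l : List ℕ) : List ℕ :=
  l.flatMap fun p => List.replicate (p / N) N ++ [p % N]

def contract (N : ℕ) : ℕ → List ℕ → List ℕ
  | _, [] => []
  | acc, x :: xs => if x = N then contract N (acc + N) xs else (acc + x) :: contract N 0 xs

lemma expand_nil (N : ℕ) : expand N [] = [] := rfl

lemma expand_cons (N p : ℕ) (l : List ℕ) :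
    expand N (p :: l) = List.replicate (p / N) N ++ (p % N :: expand N l) := by
  simp [expand]

lemma contract_cons_eq (N acc : ℕ) (xs : List ℕ) :
    contract N acc (N :: xs) = contract N (acc + N) xs := by
  rw [contract, if_pos rfl]

lemma contract_cons_ne (N acc x : ℕ) (hx : x ≠ N) (xs : List ℕ) :
    contract N acc (x :: xs) = (acc + x) :: contract N 0 xs := by
  rw [contract, if_neg hx]

lemma expand_sum (N : ℕ) (l : List ℕ) : (expand N l).sum = l.sum := by
  induction l with
  | nil => simp [expand]
  | cons p l ih =>
    rw [expand_cons]
    simp only [List.sum_append, List.sum_cons, List.sum_replicate, smul_eq_mul, ih]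
    have h := Nat.div_add_mod p N
    rw [Nat.mul_comm] at h
    omega

lemma expand_mem (N x : ℕ) (l : List ℕ) (hx : x ∈ expand N l) :
    x = N ∨ ∃ p ∈ l, x = p % N := by
  simp only [expand, List.mem_flatMap, List.mem_append, List.mem_replicate,
    List.mem_singleton] at hx
  obtain ⟨p, hp, h⟩ := hx
  rcases h with h | h
  · exact Or.inl h.2
  · exact Or.inr ⟨p, hp, h⟩

lemma expand_ne_nil (N p : ℕ) (l : List ℕ) : expand N (p :: l) ≠ [] := by
  rw [expand_cons]
  simp

lemma expand_getLast? (N : ℕ) (l : List ℕ) (hl : l ≠ []) :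
    (expand N l).getLast? = l.getLast?.map (· % N) := by
  induction l with
  | nil => simp at hl
  | cons p l ih =>
    cases l with
    | nil =>
      rw [expand_cons, expand_nil]
      simp [List.getLast?_concat]
    | cons q l' =>
      have h1 : expand N (q :: l') ≠ [] := expand_ne_nil N q l'
      obtain ⟨a, t, hE⟩ := List.exists_cons_of_ne_nil h1
      have hq := ih (List.cons_ne_nil q l')
      rw [expand_cons, List.getLast?_append, hE, List.getLast?_cons_cons, ← hE, hq,
        List.getLast?_cons_cons]
      obtain ⟨b, hb⟩ : ∃ b, (q :: l').getLast? = some b :=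
        ⟨_, List.getLast?_eq_getLast (by simp)⟩
      rw [hb]
      rfl

lemma contract_replicate (N : ℕ) (r : ℕ) (hr : r ≠ N) :
    ∀ (j acc : ℕ) (rest : List ℕ),
      contract N acc (List.replicate j N ++ r :: rest) = (acc + j * N + r) :: contract N 0 rest := by
  intro j
  induction j with
  | zero =>
    intro acc rest
    simp only [List.replicate, List.nil_append, contract_cons_ne N acc r hr]
    norm_num
  | succ j ih =>
    intro acc rest
    rw [List.replicate_succ, List.cons_append, contract_cons_eq, ih]
    congr 1
    ring

lemma contract_expand (N : ℕ) (hN : 1 ≤ N) :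
    ∀ (l : List ℕ), (∀ p ∈ l, ¬ N ∣ p) → contract N 0 (expand N l) = l := by
  intro l
  induction l with
  | nil => intro _; rfl
  | cons p l ih =>
    intro h
    rw [expand_cons]
    have hmod : p % N < N := Nat.mod_lt _ hN
    rw [contract_replicate N (p % N) (by omega)]
    rw [ih fun q hq => h q (List.mem_cons_of_mem _ hq)]
    have h2 := Nat.div_add_mod p N
    rw [Nat.mul_comm] at h2
    congr 1
    omega

lemma getLast?_tail_ne {x N : ℕ} {xs : List ℕ} (h : (x :: xs).getLast? ≠ some N) :
    xs.getLast? ≠ some N := by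
  cases xs with
  | nil => simp
  | cons a b => rwa [List.getLast?_cons_cons] at h

lemma expand_contract (N : ℕ) (hN : 1 ≤ N) :
    ∀ (m : List ℕ) (k : ℕ), (∀ x ∈ m, x ≤ N) → (m.getLast? ≠ some N) → (m = [] → k = 0) →
      expand N (contract N (k * N) m) = List.replicate k N ++ m := by
  intro m
  induction m with
  | nil =>
    intro k _ _ h3
    rw [h3 rfl]
    rfl
  | cons x xs ih =>
    intro k h1 h2 _
    by_cases hx : x = N
    · have hxs : xs ≠ [] := by
        rintro rfl
        exact h2 (by simp [hx])
      rw [hx, contract_cons_eq, show k * N + N = (k + 1) * N by ring,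
        ih (k + 1) (fun y hy => h1 y (List.mem_cons_of_mem _ hy)) (getLast?_tail_ne h2)
          (fun h => absurd h hxs), List.replicate_succ']
      simp
    · have hxN : x < N := lt_of_le_of_ne (h1 x (List.mem_cons_self)) hx
      rw [contract_cons_ne N _ x hx, expand_cons]
      have hdiv : (k * N + x) / N = k := by
        rw [Nat.mul_comm, Nat.add_comm, Nat.add_mul_div_left _ _ hN, Nat.div_eq_of_lt hxN]
        omega
      have hmod : (k * N + x) % N = x := by
        rw [Nat.add_mod, Nat.mul_mod_left]
        simp [Nat.mod_eq_of_lt hxN]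
      have h := ih 0 (fun y hy => h1 y (List.mem_cons_of_mem _ hy)) (getLast?_tail_ne h2)
        (fun _ => rfl)
      rw [zero_mul] at h
      rw [h, hdiv, hmod]
      simp

lemma contract_parts (N : ℕ) (hN : 1 ≤ N) :
    ∀ (m : List ℕ) (k : ℕ), (∀ x ∈ m, 1 ≤ x ∧ x ≤ N) →
      ∀ q ∈ contract N (k * N) m, ¬ N ∣ q ∧ 0 < q := by
  intro m
  induction m with
  | nil => intro k _ q hq; simp [contract] at hq
  | cons x xs ih =>
    intro k h q hq
    by_cases hx : x = N
    · rw [hx, contract_cons_eq, show k * N + N = (k + 1) * N by ring] at hq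
      exact ih (k + 1) (fun y hy => h y (List.mem_cons_of_mem _ hy)) q hq
    · have hx1 : 1 ≤ x := (h x (List.mem_cons_self)).1
      have hxN : x < N := lt_of_le_of_ne (h x (List.mem_cons_self)).2 hx
      rw [contract_cons_ne N _ x hx, List.mem_cons] at hq
      rcases hq with rfl | hq
      · constructor
        · intro hdvd
          have hd : N ∣ x := (Nat.dvd_add_right ⟨k, by ring⟩).mp hdvd
          have := Nat.le_of_dvd (by omega) hd
          omega
        · omega
      · exact ih 0 (fun y hy => h y (List.mem_cons_of_mem _ hy)) q (by rwa [zero_mul])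

end CardFGAux

open CardFGAux in
/-- For `n ≥ 1` and `N ≥ 1`, the number of compositions of `n` with no part
divisible by `N` equals the number of compositions of `n` with all parts in
`[1,N]` and last part in `[1,N-1]`. -/
theorem card_F_eq_card_G (n N : ℕ) (hn : 1 ≤ n) (hN : 1 ≤ N) :
    ((Finset.univ : Finset (Composition n)).filter
        (fun c => ∀ p ∈ c.blocks, ¬ N ∣ p)).card =
      ((Finset.univ : Finset (Composition n)).filter
        (fun c => (∀ p ∈ c.blocks, p ≤ N) ∧
          ∀ p, c.blocks.getLast? = some p → p ≤ N - 1)).card := by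
  refine Finset.card_bij'
    (i := fun c hc =>
      ⟨expand N c.blocks, ?_, by rw [expand_sum]; exact c.blocks_sum⟩)
    (j := fun c hc =>
      ⟨contract N 0 c.blocks, ?_, ?_⟩) ?_ ?_ ?_ ?_
  · -- positivity of expand blocks
    intro p hp
    have hc' := (Finset.mem_filter.mp hc).2
    rcases expand_mem N p _ hp with rfl | ⟨q, hq, rfl⟩
    · omega
    · have := hc' q hq
      have : q % N ≠ 0 := fun h0 => this (Nat.dvd_of_mod_eq_zero h0)
      omega
  · -- positivity of contract blocks
    intro p hp
    have := (contract_parts N hN c.blocks 0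
      (fun x hx => ⟨c.blocks_pos hx, ((Finset.mem_filter.mp hc).2.1 x hx)⟩) p
      (by rwa [zero_mul])).2
    exact this
  · -- sum of contract blocks
    have hG := (Finset.mem_filter.mp hc).2
    have hlast : c.blocks.getLast? ≠ some N := by
      intro h
      have := hG.2 N h
      omega
    have := expand_contract N hN c.blocks 0 hG.1 hlast (fun _ => rfl)
    rw [zero_mul, List.replicate_zero, List.nil_append] at this
    calc (contract N 0 c.blocks).sum = (expand N (contract N 0 c.blocks)).sum :=
          (expand_sum _ _).symm
      _ = c.blocks.sum := by rw [this]
      _ = n := c.blocks_sum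
  · -- i maps into G
    intro c hc
    have hc' := (Finset.mem_filter.mp hc).2
    refine Finset.mem_filter.mpr ⟨Finset.mem_univ _, ?_, ?_⟩
    · intro p hp
      rcases expand_mem N p _ hp with hp' | ⟨q, hq, rfl⟩
      · exact hp'.le
      · exact le_of_lt (Nat.mod_lt _ hN)
    · intro p hp
      simp only at hp
      cases hb : c.blocks with
      | nil => rw [hb, expand_nil] at hp; simp at hp
      | cons a t =>
        rw [hb, expand_getLast? N _ (List.cons_ne_nil a t)] at hp
        obtain ⟨b, hb1, hb2⟩ := Option.map_eq_some_iff.mp hp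
        have : b % N < N := Nat.mod_lt _ hN
        omega
  · -- j maps into F
    intro c hc
    refine Finset.mem_filter.mpr ⟨Finset.mem_univ _, ?_⟩
    intro p hp
    simp only at hp
    exact (contract_parts N hN c.blocks 0
      (fun x hx => ⟨c.blocks_pos hx, ((Finset.mem_filter.mp hc).2.1 x hx)⟩) p
      (by rwa [zero_mul])).1
  · -- left inverse
    intro c hc
    have hc' := (Finset.mem_filter.mp hc).2
    exact Composition.ext (contract_expand N hN c.blocks hc')
  · -- right inverse
    intro c hc
    have hG := (Finset.mem_filter.mp hc).2
    have hlast : c.blocks.getLast? ≠ some N := by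
      intro h
      have := hG.2 N h
      omega
    have := expand_contract N hN c.blocks 0 hG.1 hlast (fun _ => rfl)
    rw [zero_mul, List.replicate_zero, List.nil_append] at this
    exact Composition.ext this
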